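/- Let f : R → R' be the ring endomorphism of the polynomial ring R = ℂ[p_{0,ij}, p_{k,st}]/(symmetry relations) sending p'_{0,ij} ↦ C(i+1; j, (i, i+1)) and p'_{k,st} ↦ p_{k,st}, where C(k;j,(i,k)) = p_{0,ij} + Σ_{m=1}^d (p_{m,ij}p_{k,km} − p_{m,kj}p_{k,im}). Then f is a ring isomorphism. -/

import Mathlib

open Finset MvPolynomial

/-- Ordered index pairs (i,j) with i ≤ j, encoding the symmetry relations
p_{·,ij} = p_{·,ji}. -/
def OPair (d : ℕ) := {ij : Fin d × Fin d // ij.1 ≤ ij.2}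

/-- Index type for the variables p_{0,ij} (left) and p_{k,st} (right) of the
ring R = ℂ[p_{0,ij}, p_{k,st}]/(symmetry relations). -/
def PIdx (d : ℕ) := OPair d ⊕ (Fin d × OPair d)

/-- The variable p_{k,st}, symmetrized in (s,t). -/
noncomputable def pvar (d : ℕ) (k s t : Fin d) : MvPolynomial (PIdx d) ℂ :=
  if h : s ≤ t then X (Sum.inr (k, ⟨(s, t), h⟩))
  else X (Sum.inr (k, ⟨(t, s), le_of_not_ge h⟩))

/-- The substitution f : p_{0,ij} ↦ C(i+1; j, (i,i+1))
= p_{0,ij} + Σ_m (p_{m,ij} p_{i+1,(i+1)m} − p_{m,(i+1)j} p_{i+1,im}),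
p_{k,st} ↦ p_{k,st}, with i+1 taken cyclically (i+1 := 1 if i = d). -/
noncomputable def deBoorSubstitution (d : ℕ) [NeZero d] :
    MvPolynomial (PIdx d) ℂ →ₐ[ℂ] MvPolynomial (PIdx d) ℂ :=
  MvPolynomial.aeval fun v =>
    match v with
    | Sum.inl ij =>
        (X (Sum.inl ij : PIdx d) : MvPolynomial (PIdx d) ℂ) +
          ∑ m : Fin d,
            (pvar d m ij.val.1 ij.val.2 *
                pvar d (ij.val.1 + 1) (ij.val.1 + 1) m -
              pvar d m (ij.val.1 + 1) ij.val.2 *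
                pvar d (ij.val.1 + 1) ij.val.1 m)
    | Sum.inr v => (X (Sum.inr v : PIdx d) : MvPolynomial (PIdx d) ℂ)

/-- The correction term. -/
noncomputable def deBoorCorr (d : ℕ) [NeZero d] (ij : OPair d) : MvPolynomial (PIdx d) ℂ :=
  ∑ m : Fin d,
    (pvar d m ij.val.1 ij.val.2 * pvar d (ij.val.1 + 1) (ij.val.1 + 1) m -
      pvar d m (ij.val.1 + 1) ij.val.2 * pvar d (ij.val.1 + 1) ij.val.1 m)

/-- The inverse substitution. -/
noncomputable def deBoorInv (d : ℕ) [NeZero d] :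
    MvPolynomial (PIdx d) ℂ →ₐ[ℂ] MvPolynomial (PIdx d) ℂ :=
  MvPolynomial.aeval fun v =>
    match v with
    | Sum.inl ij => (X (Sum.inl ij : PIdx d) : MvPolynomial (PIdx d) ℂ) - deBoorCorr d ij
    | Sum.inr v => (X (Sum.inr v : PIdx d) : MvPolynomial (PIdx d) ℂ)

lemma deBoorSubstitution_pvar (d : ℕ) [NeZero d] (k s t : Fin d) :
    deBoorSubstitution d (pvar d k s t) = pvar d k s t := by
  unfold pvar deBoorSubstitution
  split <;> exact aeval_X _ _

lemma deBoorInv_pvar (d : ℕ) [NeZero d] (k s t : Fin d) :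
    deBoorInv d (pvar d k s t) = pvar d k s t := by
  unfold pvar deBoorInv
  split <;> exact aeval_X _ _

lemma deBoorSubstitution_corr (d : ℕ) [NeZero d] (ij : OPair d) :
    deBoorSubstitution d (deBoorCorr d ij) = deBoorCorr d ij := by
  unfold deBoorCorr
  simp only [map_sum, map_sub, map_mul, deBoorSubstitution_pvar]

lemma deBoorInv_corr (d : ℕ) [NeZero d] (ij : OPair d) :
    deBoorInv d (deBoorCorr d ij) = deBoorCorr d ij := by
  unfold deBoorCorr
  simp only [map_sum, map_sub, map_mul, deBoorInv_pvar]

lemma deBoor_comp_inv (d : ℕ) [NeZero d] :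
    (deBoorSubstitution d).comp (deBoorInv d) = AlgHom.id ℂ _ := by
  apply MvPolynomial.algHom_ext
  rintro (ij | v)
  · simp only [AlgHom.comp_apply, AlgHom.id_apply]
    rw [show deBoorInv d (X (Sum.inl ij : PIdx d)) =
        (X (Sum.inl ij : PIdx d) : MvPolynomial (PIdx d) ℂ) - deBoorCorr d ij from aeval_X _ _]
    rw [map_sub, deBoorSubstitution_corr,
      show deBoorSubstitution d (X (Sum.inl ij : PIdx d)) =
        (X (Sum.inl ij : PIdx d) : MvPolynomial (PIdx d) ℂ) + deBoorCorr d ij from aeval_X _ _]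
    ring
  · simp only [AlgHom.comp_apply, AlgHom.id_apply]
    rw [show deBoorInv d (X (Sum.inr v : PIdx d)) = X (Sum.inr v : PIdx d) from aeval_X _ _]
    exact aeval_X _ _

lemma deBoor_inv_comp (d : ℕ) [NeZero d] :
    (deBoorInv d).comp (deBoorSubstitution d) = AlgHom.id ℂ _ := by
  apply MvPolynomial.algHom_ext
  rintro (ij | v)
  · simp only [AlgHom.comp_apply, AlgHom.id_apply]
    rw [show deBoorSubstitution d (X (Sum.inl ij : PIdx d)) =
        (X (Sum.inl ij : PIdx d) : MvPolynomial (PIdx d) ℂ) + deBoorCorr d ij from aeval_X _ _]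
    rw [map_add, deBoorInv_corr,
      show deBoorInv d (X (Sum.inl ij : PIdx d)) =
        (X (Sum.inl ij : PIdx d) : MvPolynomial (PIdx d) ℂ) - deBoorCorr d ij from aeval_X _ _]
    ring
  · simp only [AlgHom.comp_apply, AlgHom.id_apply]
    rw [show deBoorSubstitution d (X (Sum.inr v : PIdx d)) = X (Sum.inr v : PIdx d) from aeval_X _ _]
    exact aeval_X _ _

/-- The substitution f is a ring isomorphism (it is a bijective ring map). -/
theorem deBoorSubstitution_bijective (d : ℕ) [NeZero d] :
    Function.Bijective (deBoorSubstitution d) := by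
  refine Function.bijective_iff_has_inverse.mpr ⟨deBoorInv d, ?_, ?_⟩
  · intro x
    exact congrFun (congrArg DFunLike.coe (deBoor_inv_comp d)) x
  · intro x
    exact congrFun (congrArg DFunLike.coe (deBoor_comp_inv d)) x
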